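/- Let 0 < ε < 1/100 and 0 < LB ≤ UB. Consider the two-stage stochastic Santa Claus setting with probabilities q_κ ≥ 0 satisfying Σ_κ q_κ ≤ 1 and with at least one q_κ > 0, and suppose every job has size at most UB. Suppose there exists a solution (a partition of the jobs into m bags, each bag of total size at most 2·UB, together with an assignment of the bags to the machines in each scenario) whose expected minimum-load value is Z and whose minimum machine load in every scenario in the support of q is at least LB. Then there exists a solution in which every nonempty bag has total job size in the interval [ε·LB, 2.5·UB] and whose expected minimum-load value is at least (1−3ε)·Z. -/

import Mathlib

open Finset

noncomputable def machineLoad {n m k : ℕ} (p : Fin n → ℝ) (σ₁ : Fin n → Fin m)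
    (σ₂ : Fin m → Fin k) (i : Fin k) : ℝ :=
  ∑ j ∈ Finset.univ.filter (fun j => σ₂ (σ₁ j) = i), p j

/-- Minimum machine load (Santa Claus value) of a fixed schedule. -/
noncomputable def minLoad {n m k : ℕ} (p : Fin n → ℝ) (σ₁ : Fin n → Fin m)
    (σ₂ : Fin m → Fin k) : ℝ :=
  ⨅ i : Fin k, machineLoad p σ₁ σ₂ i

noncomputable def bagSize {n m : ℕ} (p : Fin n → ℝ) (σ₁ : Fin n → Fin m) (b : Fin m) : ℝ :=
  ∑ j ∈ Finset.univ.filter (fun j => σ₁ j = b), p j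

lemma machineLoad_eq_sum_bags {n m k : ℕ} (p : Fin n → ℝ) (σ₁ : Fin n → Fin m)
    (τ : Fin m → Fin k) (i : Fin k) :
    machineLoad p σ₁ τ i = ∑ b ∈ univ.filter (fun b => τ b = i), bagSize p σ₁ b := by
  unfold machineLoad bagSize
  rw [Finset.sum_fiberwise_eq_sum_filter]
  congr 1
  ext j
  simp

lemma bagSize_comp {n m : ℕ} (p : Fin n → ℝ) (σ₁ : Fin n → Fin m) (f : Fin m → Fin m)
    (b : Fin m) :
    bagSize p (fun j => f (σ₁ j)) b = ∑ c ∈ univ.filter (fun c => f c = b), bagSize p σ₁ c := by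
  unfold bagSize
  rw [Finset.sum_fiberwise_eq_sum_filter]
  congr 1
  ext j
  simp

lemma machineLoad_comp {n m k : ℕ} (p : Fin n → ℝ) (σ₁ : Fin n → Fin m) (f : Fin m → Fin m)
    (τ : Fin m → Fin k) (i : Fin k) :
    machineLoad p (fun j => f (σ₁ j)) τ i = machineLoad p σ₁ (fun b => τ (f b)) i := rfl

lemma minLoad_le {n m k : ℕ} (p : Fin n → ℝ) (σ₁ : Fin n → Fin m)
    (τ : Fin m → Fin (k+1)) (i : Fin (k+1)) :
    minLoad p σ₁ τ ≤ machineLoad p σ₁ τ i :=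
  ciInf_le (Finite.bddBelow_range _) i

lemma le_minLoad {n m k : ℕ} (p : Fin n → ℝ) (σ₁ : Fin n → Fin m)
    (τ : Fin m → Fin (k+1)) (c : ℝ) (h : ∀ i, c ≤ machineLoad p σ₁ τ i) :
    c ≤ minLoad p σ₁ τ := le_ciInf h


lemma assign_lemma {α : Type*} [DecidableEq α] (c : ℝ) (hc : 0 ≤ c) :
    ∀ (k : ℕ) (s : Fin (k+1) → ℝ), (∀ i, 0 ≤ s i) → ∀ (R : Finset α) (u : α → ℝ),
      (∀ r ∈ R, 0 < u r ∧ u r ≤ c) →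
      (∑ i, s i ≤ ∑ r ∈ R, u r) →
      ∃ a : α → Fin (k+1), ∀ i, s i - c ≤ ∑ r ∈ R.filter (fun r => a r = i), u r := by
  intro k
  induction k with
  | zero =>
    intro s hs R u hu htot
    refine ⟨fun _ => 0, fun i => ?_⟩
    have hi : i = 0 := Fin.fin_one_eq_zero i
    subst hi
    have hfil : R.filter (fun r => (0 : Fin 1) = 0) = R := by simp
    rw [hfil]
    have : s 0 ≤ ∑ r ∈ R, u r := by
      calc s 0 ≤ ∑ i, s i := by
            rw [Fin.sum_univ_one]
          _ ≤ _ := htot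
    linarith
  | succ k ih =>
    intro s hs R u hu htot
    set lastD : ℝ := s (Fin.last (k+1)) with hlastD
    obtain ⟨T, hTmem, hTmax⟩ := Finset.exists_max_image
      ((R.powerset).filter (fun T => ∑ r ∈ T, u r ≤ lastD))
      (fun T => ∑ r ∈ T, u r)
      ⟨∅, by simp [hlastD, hs (Fin.last (k+1))]⟩
    rw [mem_filter, mem_powerset] at hTmem
    obtain ⟨hTR, hTle⟩ := hTmem
    have hupos : ∀ r ∈ R, 0 ≤ u r := fun r hr => (hu r hr).1.le
    -- lower bound on u(T)
    have hTlb : lastD - c ≤ ∑ r ∈ T, u r := by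
      by_cases hRT : R ⊆ T
      · have hTeq : T = R := subset_antisymm hTR hRT
        subst hTeq
        have : lastD ≤ ∑ i, s i := Finset.single_le_sum (fun i _ => hs i) (mem_univ _)
        linarith
      · obtain ⟨j, hjR, hjT⟩ := not_subset.mp hRT
        by_contra hcon
        push_neg at hcon
        have hins : insert j T ∈ (R.powerset).filter (fun T => ∑ r ∈ T, u r ≤ lastD) := by
          rw [mem_filter, mem_powerset]
          constructor
          · exact insert_subset hjR hTR
          · rw [Finset.sum_insert hjT]
            have := (hu j hjR).2
            linarith
        have := hTmax _ hins
        rw [Finset.sum_insert hjT] at this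
        have := (hu j hjR).1
        linarith
    -- apply IH
    have hsub : T ⊆ R := hTR
    have hsum_sdiff : ∑ r ∈ R \ T, u r + ∑ r ∈ T, u r = ∑ r ∈ R, u r := Finset.sum_sdiff hsub
    have htot' : ∑ i : Fin (k+1), s i.castSucc ≤ ∑ r ∈ R \ T, u r := by
      have h1 : ∑ i, s i = ∑ i : Fin (k+1), s i.castSucc + lastD := Fin.sum_univ_castSucc s
      linarith
    obtain ⟨a', ha'⟩ := ih (fun i => s i.castSucc) (fun i => hs _) (R \ T) u
      (fun r hr => hu r (sdiff_subset hr)) htot'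
    refine ⟨fun r => if r ∈ T then Fin.last (k+1) else (a' r).castSucc, fun i => ?_⟩
    induction i using Fin.lastCases with
    | last => -- i = last
      have hTsub : T ⊆ R.filter (fun r => (if r ∈ T then Fin.last (k+1) else (a' r).castSucc) = Fin.last (k+1)) := by
        intro r hr
        rw [mem_filter]
        exact ⟨hTR hr, by simp [hr]⟩
      have := Finset.sum_le_sum_of_subset_of_nonneg hTsub
        (fun r hr _ => hupos r (mem_filter.mp hr).1)
      linarith
    | cast i' =>
      have hfil : R.filter (fun r => (if r ∈ T then Fin.last (k+1) else (a' r).castSucc) = i'.castSucc)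
          = (R \ T).filter (fun r => a' r = i') := by
        ext r
        simp only [mem_filter, mem_sdiff]
        constructor
        · rintro ⟨hrR, hr⟩
          by_cases hrT : r ∈ T
          · simp only [hrT, if_true] at hr
            exact absurd hr.symm (Fin.castSucc_lt_last i').ne
          · simp only [hrT, if_false] at hr
            exact ⟨⟨hrR, hrT⟩, Fin.castSucc_injective _ hr⟩
        · rintro ⟨⟨hrR, hrT⟩, hr⟩
          exact ⟨hrR, by simp [hrT, hr]⟩
      rw [hfil]
      exact ha' i'


lemma group_lemma {α : Type*} [DecidableEq α] (w : α → ℝ) (d : ℝ) (hd : 0 < d) :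
    ∀ (N : ℕ) (B : Finset α), B.card ≤ N →
      (∀ b ∈ B, 0 < w b ∧ w b < d) → d ≤ ∑ b ∈ B, w b →
      ∃ g : α → α, (∀ b, b ∉ B → g b = b) ∧ (∀ b ∈ B, g b ∈ B) ∧
        (∀ b, g (g b) = g b) ∧
        (∀ r ∈ B, g r = r →
          d ≤ ∑ b ∈ B.filter (fun b => g b = r), w b ∧
          ∑ b ∈ B.filter (fun b => g b = r), w b ≤ 3 * d) := by
  intro N
  induction N with
  | zero =>
    intro B hcard _ hsum
    interval_cases h : B.card
    · rw [Finset.card_eq_zero.mp h] at hsum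
      simp at hsum
      linarith
  | succ N ih =>
    intro B hcard hsmall hsum
    have hBne : B.Nonempty := by
      rcases B.eq_empty_or_nonempty with h | h
      · rw [h] at hsum; simp at hsum; linarith
      · exact h
    by_cases hbig : ∑ b ∈ B, w b ≤ 3 * d
    · -- single group
      obtain ⟨b₀, hb₀⟩ := hBne
      refine ⟨fun b => if b ∈ B then b₀ else b, fun b hb => by simp [hb], fun b hb => by simp [hb, hb₀], ?_, ?_⟩
      · intro b
        by_cases hb : b ∈ B
        · simp [hb, hb₀]
        · simp [hb]
      · intro r hr hfix
        have hb0r : b₀ = r := by simpa [hr] using hfix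
        have hfil : B.filter (fun b => (if b ∈ B then b₀ else b) = r) = B := by
          apply Finset.filter_true_of_mem
          intro b hb
          simp [hb, hb0r]
        rw [hfil]
        exact ⟨hsum, hbig⟩
    · push_neg at hbig
      -- find minimal T with d ≤ w(T)
      obtain ⟨T, hTmem, hTmin⟩ := Finset.exists_min_image
        ((B.powerset).filter (fun T => d ≤ ∑ b ∈ T, w b))
        (fun T => ∑ b ∈ T, w b)
        ⟨B, by rw [mem_filter, mem_powerset]; exact ⟨Finset.Subset.refl _, hsum⟩⟩
      rw [mem_filter, mem_powerset] at hTmem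
      obtain ⟨hTB, hTd⟩ := hTmem
      have hTne : T.Nonempty := by
        rcases T.eq_empty_or_nonempty with h | h
        · rw [h] at hTd; simp at hTd; linarith
        · exact h
      obtain ⟨t, ht⟩ := hTne
      have hwT2 : ∑ b ∈ T, w b < 2 * d := by
        have herase : w t + ∑ b ∈ T.erase t, w b = ∑ b ∈ T, w b := Finset.add_sum_erase T w ht
        have hlt : ∑ b ∈ T.erase t, w b < d := by
          by_contra hcon
          push_neg at hcon
          have hmem : T.erase t ∈ (B.powerset).filter (fun T => d ≤ ∑ b ∈ T, w b) := by
            rw [mem_filter, mem_powerset]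
            exact ⟨(Finset.erase_subset t T).trans hTB, hcon⟩
          have := hTmin _ hmem
          have hwt := (hsmall t (hTB ht)).1
          linarith
        have hwt := (hsmall t (hTB ht)).2
        linarith
      set B' := B \ T with hB'
      have hB'card : B'.card ≤ N := by
        have h1 : B'.card = B.card - T.card := Finset.card_sdiff_of_subset hTB
        have h2 : 1 ≤ T.card := Finset.card_pos.mpr ⟨t, ht⟩
        omega
      have hB'small : ∀ b ∈ B', 0 < w b ∧ w b < d := fun b hb => hsmall b (sdiff_subset hb)
      have hB'sumEq : ∑ b ∈ B', w b + ∑ b ∈ T, w b = ∑ b ∈ B, w b := Finset.sum_sdiff hTB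
      have hB'sum : d ≤ ∑ b ∈ B', w b := by linarith
      obtain ⟨g', hg'id, hg'mem, hg'idem, hg'fix⟩ := ih B' hB'card hB'small hB'sum
      have hB'T : ∀ b, b ∈ B' → b ∉ T := fun b hb => (mem_sdiff.mp hb).2
      have hTB' : ∀ b, b ∈ T → b ∉ B' := fun b hb hb' => hB'T b hb' hb
      refine ⟨fun b => if b ∈ T then t else g' b, ?_, ?_, ?_, ?_⟩
      · intro b hb
        have hbT : b ∉ T := fun h => hb (hTB h)
        have hbB' : b ∉ B' := fun h => hb (sdiff_subset h)
        simp [hbT, hg'id b hbB']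
      · intro b hb
        by_cases hbT : b ∈ T
        · simp [hbT, hTB ht]
        · have hbB' : b ∈ B' := mem_sdiff.mpr ⟨hb, hbT⟩
          simpa [hbT] using sdiff_subset (hg'mem b hbB')
      · intro b
        by_cases hbT : b ∈ T
        · simp [hbT, ht]
        · simp only [hbT, if_false]
          by_cases hbB' : b ∈ B'
          · have h1 : g' b ∈ B' := hg'mem b hbB'
            have h2 : g' b ∉ T := hB'T _ h1
            simp [h2, hg'idem b]
          · have h1 : g' b = b := by
              by_cases hbB : b ∈ B
              · exact absurd (mem_sdiff.mpr ⟨hbB, hbT⟩) hbB'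
              · exact hg'id b (fun h => hbB (sdiff_subset h))
            rw [h1]
            simp [hbT, h1]
      · intro r hr hfix
        by_cases hrT : r ∈ T
        · have hrt : t = r := by simpa [hrT] using hfix
          have hfil : B.filter (fun b => (if b ∈ T then t else g' b) = r) = T := by
            ext b
            simp only [mem_filter]
            constructor
            · rintro ⟨hbB, hb⟩
              by_cases hbT : b ∈ T
              · exact hbT
              · simp only [hbT, if_false] at hb
                have hbB' : b ∈ B' := mem_sdiff.mpr ⟨hbB, hbT⟩
                exact absurd (hb ▸ hg'mem b hbB') (hTB' r hrT)
            · intro hbT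
              exact ⟨hTB hbT, by simp [hbT, hrt]⟩
          rw [hfil]
          constructor
          · exact hTd
          · linarith
        · have hrB' : r ∈ B' := mem_sdiff.mpr ⟨hr, hrT⟩
          have hfix' : g' r = r := by simpa [hrT] using hfix
          have hfil : B.filter (fun b => (if b ∈ T then t else g' b) = r)
              = B'.filter (fun b => g' b = r) := by
            ext b
            simp only [mem_filter, hB', mem_sdiff]
            constructor
            · rintro ⟨hbB, hb⟩
              by_cases hbT : b ∈ T
              · simp only [hbT, if_true] at hb
                exact absurd (hb ▸ ht) hrT
              · simp only [hbT, if_false] at hb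
                exact ⟨⟨hbB, hbT⟩, hb⟩
            · rintro ⟨⟨hbB, hbT⟩, hb⟩
              exact ⟨hbB, by simp [hbT, hb]⟩
          rw [hfil]
          exact hg'fix r hrB' hfix'

theorem stmt11 (ε LB UB : ℝ) (hε : 0 < ε) (hε1 : ε < 1 / 100)
    (hLB : 0 < LB) (hLBUB : LB ≤ UB)
    (n m : ℕ) (hn : 0 < n) (hm : 2 ≤ m)
    (p : Fin n → ℝ) (hp : ∀ j, 0 < p j) (hpUB : ∀ j, p j ≤ UB)
    (q : Fin m → ℝ) (hq : ∀ κ, 0 ≤ q κ) (hq1 : ∑ κ, q κ ≤ 1) (hqpos : ∃ κ, 0 < q κ)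
    (σ₁ : Fin n → Fin m) (σ₂ : (κ : Fin m) → Fin m → Fin (κ.val + 1))
    (hbag : ∀ b : Fin m, bagSize p σ₁ b ≤ 2 * UB)
    (Z : ℝ) (hZ : Z = ∑ κ : Fin m, q κ * minLoad p σ₁ (σ₂ κ))
    (hsupp : ∀ κ : Fin m, 0 < q κ → LB ≤ minLoad p σ₁ (σ₂ κ)) :
    ∃ (σ₁' : Fin n → Fin m) (σ₂' : (κ : Fin m) → Fin m → Fin (κ.val + 1)),
      (∀ b : Fin m, (∃ j, σ₁' j = b) →
        ε * LB ≤ bagSize p σ₁' b ∧ bagSize p σ₁' b ≤ (5 / 2) * UB) ∧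
      (1 - 3 * ε) * Z ≤ ∑ κ : Fin m, q κ * minLoad p σ₁' (σ₂' κ) := by
  classical
  obtain ⟨κ₀, hκ₀⟩ := hqpos
  have hUB0 : 0 < UB := lt_of_lt_of_le hLB hLBUB
  set w : Fin m → ℝ := bagSize p σ₁ with hwdef
  have hw0 : ∀ b, 0 ≤ w b := fun b => Finset.sum_nonneg (fun j _ => (hp j).le)
  have hwUB : ∀ b, w b ≤ 2 * UB := hbag
  set d : ℝ := ε * LB with hddef
  have hd0 : 0 < d := mul_pos hε hLB
  have hdlt : d < LB := by nlinarith
  have hdUB : 3 * d ≤ UB := by nlinarith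
  set S : Finset (Fin m) := univ.filter (fun b => 0 < w b ∧ w b < d) with hSdef
  have hml : ∀ (k : ℕ) (τ : Fin m → Fin k) (i : Fin k),
      machineLoad p σ₁ τ i = ∑ b ∈ univ.filter (fun b => τ b = i), w b :=
    fun k τ i => machineLoad_eq_sum_bags p σ₁ τ i
  have hload : ∀ κ : Fin m, 0 < q κ → ∀ i, LB ≤ machineLoad p σ₁ (σ₂ κ) i :=
    fun κ hκ i => le_trans (hsupp κ hκ) (minLoad_le p σ₁ (σ₂ κ) i)
  have htotal : LB ≤ ∑ b, w b := by
    have h1 := hload κ₀ hκ₀ 0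
    rw [hml _ (σ₂ κ₀) 0] at h1
    exact le_trans h1 (Finset.sum_le_sum_of_subset_of_nonneg (Finset.filter_subset _ _)
      (fun b _ _ => hw0 b))
  -- positivity of fibers of nonempty new bags
  have hfibpos : ∀ (f : Fin m → Fin m) (b : Fin m) (j : Fin n), f (σ₁ j) = b →
      0 < ∑ c ∈ univ.filter (fun c => f c = b), w c := by
    intro f b j hj
    have h1 : p j ≤ w (σ₁ j) := by
      apply Finset.single_le_sum (f := p) (fun j' _ => (hp j').le)
      simp
    have h2 : w (σ₁ j) ≤ ∑ c ∈ univ.filter (fun c => f c = b), w c := by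
      apply Finset.single_le_sum (fun c _ => hw0 c)
      simp [hj]
    linarith [hp j]
  by_cases hws : ∑ b ∈ S, w b < d
  · -- Case A : total small mass is tiny; merge all small bags into one big bag
    have h2d : 2 * d < LB := by nlinarith
    have hsplitU : ∑ b ∈ univ.filter (fun b => 0 < w b ∧ w b < d), w b
        + ∑ b ∈ univ.filter (fun b => ¬(0 < w b ∧ w b < d)), w b = ∑ b, w b :=
      Finset.sum_filter_add_sum_filter_not univ _ w
    have hSc : d ≤ ∑ b ∈ univ.filter (fun b => ¬(0 < w b ∧ w b < d)), w b := by
      rw [hSdef] at hws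
      linarith
    have hexists : ∃ b ∈ univ.filter (fun b => ¬(0 < w b ∧ w b < d)), (0:ℝ) < w b := by
      by_contra hcon
      have : ∑ b ∈ univ.filter (fun b => ¬(0 < w b ∧ w b < d)), w b ≤ 0 :=
        Finset.sum_nonpos (fun b hb => le_of_not_gt (fun hpos => hcon ⟨b, hb, hpos⟩))
      linarith
    obtain ⟨bb, hbbmem, hbbpos⟩ := hexists
    rw [mem_filter] at hbbmem
    have hbbbig : d ≤ w bb := by
      by_contra h
      push_neg at h
      exact hbbmem.2 ⟨hbbpos, h⟩
    have hbbS : bb ∉ S := by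
      rw [hSdef, mem_filter]
      tauto
    set f : Fin m → Fin m := fun b => if b ∈ S then bb else b with hfdef
    refine ⟨fun j => f (σ₁ j), σ₂, ?_, ?_⟩
    · rintro b ⟨j, hj⟩
      have hfib := hfibpos f b j hj
      have hbs : bagSize p (fun j => f (σ₁ j)) b
          = ∑ c ∈ univ.filter (fun c => f c = b), w c := bagSize_comp p σ₁ f b
      rw [hbs]
      by_cases hb : b = bb
      · subst hb
        have hfil : univ.filter (fun c => f c = b) = insert b S := by
          ext c
          simp only [mem_filter, mem_univ, true_and, mem_insert, hfdef]
          by_cases hc : c ∈ S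
          · simp [hc]
          · simp [hc]
        rw [hfil, Finset.sum_insert hbbS]
        have hS0 : 0 ≤ ∑ c ∈ S, w c := Finset.sum_nonneg (fun c _ => hw0 c)
        constructor
        · linarith
        · have := hwUB b
          linarith
      · by_cases hbS : b ∈ S
        · exfalso
          have hfil : univ.filter (fun c => f c = b) = ∅ := by
            ext c
            simp only [mem_filter, mem_univ, true_and, notMem_empty, iff_false, hfdef]
            by_cases hc : c ∈ S
            · simp only [hc, if_true]
              exact fun h => hb h.symm
            · simp only [hc, if_false]
              rintro rfl
              exact hc hbS
          rw [hfil] at hfib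
          simp at hfib
        · have hfil : univ.filter (fun c => f c = b) = {b} := by
            ext c
            simp only [mem_filter, mem_univ, true_and, mem_singleton, hfdef]
            by_cases hc : c ∈ S
            · simp only [hc, if_true]
              constructor
              · exact fun h => absurd h.symm hb
              · rintro rfl; exact absurd hc hbS
            · simp [hc]
          rw [hfil, Finset.sum_singleton]
          have hwbpos : 0 < w b := by
            rw [hfil, Finset.sum_singleton] at hfib
            exact hfib
          have hnb : ¬(0 < w b ∧ w b < d) := by
            simp only [hSdef, mem_filter, mem_univ, true_and] at hbS
            exact hbS
          have hbd : d ≤ w b := by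
            by_contra h
            push_neg at h
            exact hnb ⟨hwbpos, h⟩
          refine ⟨hbd, le_trans (hwUB b) (by nlinarith)⟩
    · -- value bound, Case A
      rw [hZ, Finset.mul_sum]
      apply Finset.sum_le_sum
      intro κ _
      rcases eq_or_lt_of_le (hq κ) with hq0 | hqp
      · rw [← hq0]; simp
      · have hbound : (1 - 3 * ε) * minLoad p σ₁ (σ₂ κ)
            ≤ minLoad p (fun j => f (σ₁ j)) (σ₂ κ) := by
          apply le_minLoad
          intro i
          rw [machineLoad_comp, hml _ _ i]
          have hsub : univ.filter (fun b => σ₂ κ b = i ∧ b ∉ S)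
              ⊆ univ.filter (fun b => σ₂ κ (f b) = i) := by
            intro b hb
            simp only [mem_filter, mem_univ, true_and] at hb ⊢
            rw [hfdef]
            simp [hb.2, hb.1]
          have h1 := Finset.sum_le_sum_of_subset_of_nonneg hsub (fun b _ _ => hw0 b)
          have hsplit : ∑ b ∈ (univ.filter (fun b => σ₂ κ b = i)).filter (fun b => b ∈ S), w b
              + ∑ b ∈ (univ.filter (fun b => σ₂ κ b = i)).filter (fun b => b ∉ S), w b
              = ∑ b ∈ univ.filter (fun b => σ₂ κ b = i), w b :=
            Finset.sum_filter_add_sum_filter_not _ _ w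
          have hff : (univ.filter (fun b => σ₂ κ b = i)).filter (fun b => b ∉ S)
              = univ.filter (fun b => σ₂ κ b = i ∧ b ∉ S) := by
            rw [Finset.filter_filter]
          have hSle : ∑ b ∈ (univ.filter (fun b => σ₂ κ b = i)).filter (fun b => b ∈ S), w b
              ≤ ∑ b ∈ S, w b := by
            apply Finset.sum_le_sum_of_subset_of_nonneg
            · intro b hb
              exact (mem_filter.mp hb).2
            · exact fun b _ _ => hw0 b
          have hl : LB ≤ ∑ b ∈ univ.filter (fun b => σ₂ κ b = i), w b := by
            have := hload κ hqp i
            rwa [hml _ (σ₂ κ) i] at this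
          have hM1 : LB ≤ minLoad p σ₁ (σ₂ κ) := hsupp κ hqp
          have hM2 : minLoad p σ₁ (σ₂ κ) ≤ ∑ b ∈ univ.filter (fun b => σ₂ κ b = i), w b := by
            have := minLoad_le p σ₁ (σ₂ κ) i
            rwa [hml _ (σ₂ κ) i] at this
          rw [hff] at hsplit
          have hεM : ε * LB ≤ ε * minLoad p σ₁ (σ₂ κ) :=
            mul_le_mul_of_nonneg_left hM1 hε.le
          rw [hddef] at hws
          nlinarith [mul_le_mul_of_nonneg_left hM2 hε.le]
        calc (1 - 3 * ε) * (q κ * minLoad p σ₁ (σ₂ κ))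
            = q κ * ((1 - 3 * ε) * minLoad p σ₁ (σ₂ κ)) := by ring
          _ ≤ q κ * minLoad p (fun j => f (σ₁ j)) (σ₂ κ) :=
              mul_le_mul_of_nonneg_left hbound (hq κ)
  · push_neg at hws
    have hSsmall : ∀ b ∈ S, 0 < w b ∧ w b < d := by
      intro b hb
      rw [hSdef, mem_filter] at hb
      exact hb.2
    obtain ⟨g, hgid, hgmem, hgidem, hgfix⟩ := group_lemma w d hd0 S.card S le_rfl hSsmall hws
    set R : Finset (Fin m) := S.filter (fun r => g r = r) with hRdef
    set u : Fin m → ℝ := fun r => ∑ b ∈ S.filter (fun b => g b = r), w b with hudef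
    have hRS : R ⊆ S := Finset.filter_subset _ _
    have hgR : ∀ b ∈ S, g b ∈ R := by
      intro b hb
      rw [hRdef, mem_filter]
      exact ⟨hgmem b hb, hgidem b⟩
    have huR : ∀ r ∈ R, d ≤ u r ∧ u r ≤ 3 * d := by
      intro r hr
      rw [hRdef, mem_filter] at hr
      exact hgfix r hr.1 hr.2
    have hsumR : ∑ r ∈ R, u r = ∑ b ∈ S, w b := by
      have h1 : ∑ r ∈ R, ∑ b ∈ S.filter (fun b => g b = r), w b
          = ∑ b ∈ S.filter (fun b => g b ∈ R), w b :=
        Finset.sum_fiberwise_eq_sum_filter S R g w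
      calc ∑ r ∈ R, u r = ∑ r ∈ R, ∑ b ∈ S.filter (fun b => g b = r), w b :=
            Finset.sum_congr rfl (fun r _ => by simp only [hudef])
        _ = ∑ b ∈ S.filter (fun b => g b ∈ R), w b := h1
        _ = ∑ b ∈ S, w b := by rw [Finset.filter_true_of_mem (fun b hb => hgR b hb)]
    have hAex : ∀ κ : Fin m, ∃ a : Fin m → Fin (κ.val + 1),
        ∀ i, (∑ b ∈ S.filter (fun b => σ₂ κ b = i), w b) - 3 * d
          ≤ ∑ r ∈ R.filter (fun r => a r = i), u r := by
      intro κ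
      exact assign_lemma (3 * d) (by linarith) κ.val
        (fun i => ∑ b ∈ S.filter (fun b => σ₂ κ b = i), w b)
        (fun i => Finset.sum_nonneg (fun b _ => hw0 b)) R u
        (fun r hr => ⟨lt_of_lt_of_le hd0 (huR r hr).1, (huR r hr).2⟩)
        (by rw [hsumR, Finset.sum_fiberwise S (σ₂ κ) w])
    choose a ha using hAex
    set f : Fin m → Fin m := fun b => if b ∈ S then g b else b with hfdef
    refine ⟨fun j => f (σ₁ j), fun κ b => if b ∈ R then a κ b else σ₂ κ b, ?_, ?_⟩
    · rintro b ⟨j, hj⟩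
      have hfib := hfibpos f b j hj
      have hbs : bagSize p (fun j => f (σ₁ j)) b
          = ∑ c ∈ univ.filter (fun c => f c = b), w c := bagSize_comp p σ₁ f b
      rw [hbs]
      by_cases hbR : b ∈ R
      · have hbS : b ∈ S := hRS hbR
        have hfil : univ.filter (fun c => f c = b) = S.filter (fun c => g c = b) := by
          ext c
          simp only [mem_filter, mem_univ, true_and, hfdef]
          by_cases hc : c ∈ S
          · simp [hc]
          · simp only [hc, if_false, false_and, iff_false]
            intro h
            subst h
            exact hc hbS
        rw [hfil]
        have hub := huR b hbR
        simp only [hudef] at hub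
        exact ⟨hub.1, le_trans hub.2 (by nlinarith)⟩
      · by_cases hbS : b ∈ S
        · exfalso
          have hfil : univ.filter (fun c => f c = b) = ∅ := by
            ext c
            simp only [mem_filter, mem_univ, true_and, notMem_empty, iff_false, hfdef]
            by_cases hc : c ∈ S
            · simp only [hc, if_true]
              intro hgc
              apply hbR
              rw [hRdef, mem_filter]
              refine ⟨hbS, ?_⟩
              rw [← hgc]
              exact hgidem c
            · simp only [hc, if_false]
              rintro rfl
              exact hc hbS
          rw [hfil] at hfib
          simp at hfib
        · have hfil : univ.filter (fun c => f c = b) = {b} := by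
            ext c
            simp only [mem_filter, mem_univ, true_and, mem_singleton, hfdef]
            by_cases hc : c ∈ S
            · simp only [hc, if_true]
              constructor
              · exact fun h => absurd (h ▸ hgmem c hc) hbS
              · intro h
                subst h
                exact absurd hc hbS
            · simp [hc]
          rw [hfil, Finset.sum_singleton]
          have hwbpos : 0 < w b := by
            rw [hfil, Finset.sum_singleton] at hfib
            exact hfib
          have hnb : ¬(0 < w b ∧ w b < d) := by
            simp only [hSdef, mem_filter, mem_univ, true_and] at hbS
            exact hbS
          have hbd : d ≤ w b := by
            by_contra h
            push_neg at h
            exact hnb ⟨hwbpos, h⟩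
          exact ⟨hbd, le_trans (hwUB b) (by nlinarith)⟩
    · rw [hZ, Finset.mul_sum]
      apply Finset.sum_le_sum
      intro κ _
      rcases eq_or_lt_of_le (hq κ) with hq0 | hqp
      · rw [← hq0]; simp
      · have hbound : (1 - 3 * ε) * minLoad p σ₁ (σ₂ κ)
            ≤ minLoad p (fun j => f (σ₁ j)) (fun b => if b ∈ R then a κ b else σ₂ κ b) := by
          apply le_minLoad
          intro i
          have hgoalEq : machineLoad p (fun j => f (σ₁ j))
                (fun b => if b ∈ R then a κ b else σ₂ κ b) i
              = ∑ b ∈ univ.filter (fun b => (if f b ∈ R then a κ (f b) else σ₂ κ (f b)) = i), w b := by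
            rw [machineLoad_comp p σ₁ f (fun b => if b ∈ R then a κ b else σ₂ κ b) i]
            exact hml _ (fun b => if f b ∈ R then a κ (f b) else σ₂ κ (f b)) i
          rw [hgoalEq]
          have hdisj : Disjoint (univ.filter (fun b => σ₂ κ b = i ∧ b ∉ S))
              (univ.filter (fun b => b ∈ S ∧ a κ (g b) = i)) := by
            rw [Finset.disjoint_left]
            intro b hb1 hb2
            exact (mem_filter.mp hb1).2.2 (mem_filter.mp hb2).2.1
          have hsub : (univ.filter (fun b => σ₂ κ b = i ∧ b ∉ S))
                ∪ (univ.filter (fun b => b ∈ S ∧ a κ (g b) = i))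
              ⊆ univ.filter (fun b => (if f b ∈ R then a κ (f b) else σ₂ κ (f b)) = i) := by
            intro b hb
            rw [Finset.mem_union] at hb
            simp only [mem_filter, mem_univ, true_and] at hb ⊢
            rcases hb with ⟨h1, h2⟩ | ⟨h1, h2⟩
            · have hfb : f b = b := by simp [hfdef, h2]
              rw [hfb]
              have hbR : b ∉ R := fun h => h2 (hRS h)
              simp [hbR, h1]
            · have hfb : f b = g b := by simp [hfdef, h1]
              rw [hfb]
              have hgbR := hgR b h1
              simp [hgbR, h2]
          have h1 := Finset.sum_le_sum_of_subset_of_nonneg hsub (fun b _ _ => hw0 b)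
          rw [Finset.sum_union hdisj] at h1
          have hsplit : ∑ b ∈ (univ.filter (fun b => σ₂ κ b = i)).filter (fun b => b ∈ S), w b
              + ∑ b ∈ (univ.filter (fun b => σ₂ κ b = i)).filter (fun b => b ∉ S), w b
              = ∑ b ∈ univ.filter (fun b => σ₂ κ b = i), w b :=
            Finset.sum_filter_add_sum_filter_not _ _ w
          have hffA : (univ.filter (fun b => σ₂ κ b = i)).filter (fun b => b ∉ S)
              = univ.filter (fun b => σ₂ κ b = i ∧ b ∉ S) := Finset.filter_filter _ _ _
          have hffS : (univ.filter (fun b => σ₂ κ b = i)).filter (fun b => b ∈ S)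
              = S.filter (fun b => σ₂ κ b = i) := by
            ext b
            simp only [mem_filter, mem_univ, true_and]
            exact and_comm
          rw [hffA, hffS] at hsplit
          have hBs : ∑ r ∈ R.filter (fun r => a κ r = i), u r
              = ∑ b ∈ univ.filter (fun b => b ∈ S ∧ a κ (g b) = i), w b := by
            calc ∑ r ∈ R.filter (fun r => a κ r = i), u r
                = ∑ r ∈ R.filter (fun r => a κ r = i), ∑ b ∈ S.filter (fun b => g b = r), w b :=
                  Finset.sum_congr rfl (fun r _ => by simp only [hudef])
              _ = ∑ b ∈ S.filter (fun b => g b ∈ R.filter (fun r => a κ r = i)), w b :=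
                  Finset.sum_fiberwise_eq_sum_filter S _ g w
              _ = ∑ b ∈ univ.filter (fun b => b ∈ S ∧ a κ (g b) = i), w b := by
                  apply Finset.sum_congr _ (fun b _ => rfl)
                  ext b
                  simp only [mem_filter, mem_univ, true_and]
                  constructor
                  · rintro ⟨hb1, _, hb3⟩
                    exact ⟨hb1, hb3⟩
                  · rintro ⟨hb1, hb2⟩
                    exact ⟨hb1, hgR b hb1, hb2⟩
          have hha := ha κ i
          rw [hBs] at hha
          have hM1 : LB ≤ minLoad p σ₁ (σ₂ κ) := hsupp κ hqp
          have hM2 : minLoad p σ₁ (σ₂ κ) ≤ ∑ b ∈ univ.filter (fun b => σ₂ κ b = i), w b := by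
            have := minLoad_le p σ₁ (σ₂ κ) i
            rwa [hml _ (σ₂ κ) i] at this
          have hεM : ε * LB ≤ ε * minLoad p σ₁ (σ₂ κ) :=
            mul_le_mul_of_nonneg_left hM1 hε.le
          have hddef' : d = ε * LB := hddef
          linarith [h1, hsplit, hha, hM1, hM2, hεM, hddef']
        calc (1 - 3 * ε) * (q κ * minLoad p σ₁ (σ₂ κ))
            = q κ * ((1 - 3 * ε) * minLoad p σ₁ (σ₂ κ)) := by ring
          _ ≤ q κ * minLoad p (fun j => f (σ₁ j)) (fun b => if b ∈ R then a κ b else σ₂ κ b) :=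
              mul_le_mul_of_nonneg_left hbound (hq κ)
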